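/- On the cycle instances of the previous statement (cycle on n vertices, k equally spaced terminals, unit costs), the minimum cost of a Steiner tree equals ((k−1)/k)·n, and consequently the ratio of the optimum Steiner tree cost to the maximum value of a laminar-support dual solution is at least ((k−1)/k)·n / (n/2 + k), which tends to 2 as k → ∞ and n/k → ∞. -/

import Mathlib

private lemma stmt7_dual_bound (n k : ℕ) [NeZero n] (hk : 2 ≤ k) (hkn : k ≤ n) (hdvd : k ∣ n)
    (y : Finset (ZMod n) → ℝ)
    (hnn : ∀ U, 0 ≤ y U)
    (hsupp : ∀ U : Finset (ZMod n),
      ¬((0 : ZMod n) ∉ U ∧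
        (U ∩ Finset.univ.filter (fun i : ZMod n => (n / k) ∣ i.val)).Nonempty) →
      y U = 0)
    (hfeas : ∀ i j : ZMod n, (j = i + 1 ∨ i = j + 1) →
      ∑ U ∈ Finset.univ.filter (fun U : Finset (ZMod n) => i ∈ U ∧ j ∉ U), y U ≤ 1)
    (hlam : ∀ A B : Finset (ZMod n), 0 < y A → 0 < y B →
      A ⊆ B ∨ B ⊆ A ∨ A ∩ B = ∅) :
    (∑ U : Finset (ZMod n), y U) ≤ (n : ℝ) / 2 + k := by
  classical
  set m := n / k with hm
  -- support
  set supp : Finset (Finset (ZMod n)) := Finset.univ.filter (fun U => y U ≠ 0) with hsuppdef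
  have hsum : ∑ U : Finset (ZMod n), y U = ∑ U ∈ supp, y U := by
    rw [hsuppdef, Finset.sum_filter_ne_zero]
  -- basic facts about support sets
  have hsupp' : ∀ U ∈ supp, (0 : ZMod n) ∉ U ∧
      (U ∩ Finset.univ.filter (fun i : ZMod n => m ∣ i.val)).Nonempty := by
    intro U hU
    by_contra h
    exact (Finset.mem_filter.mp hU).2 (hsupp U h)
  have hne : ∀ U ∈ supp, U.Nonempty := by
    intro U hU
    obtain ⟨x, hx⟩ := (hsupp' U hU).2
    exact ⟨x, (Finset.mem_inter.mp hx).1⟩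
  -- min and max value functions
  set f : Finset (ZMod n) → ℕ := fun S =>
    if h : S.Nonempty then (S.image ZMod.val).min' (h.image _) else 0 with hf
  set g : Finset (ZMod n) → ℕ := fun S =>
    if h : S.Nonempty then (S.image ZMod.val).max' (h.image _) else 0 with hg
  have hfmem : ∀ S, S.Nonempty → ∃ x ∈ S, x.val = f S := by
    intro S h
    have := Finset.min'_mem (S.image ZMod.val) (h.image _)
    rw [Finset.mem_image] at this
    obtain ⟨x, hx, hx'⟩ := this
    exact ⟨x, hx, by rw [hf]; simp [h, hx']⟩
  have hfle : ∀ S (h : S.Nonempty), ∀ x ∈ S, f S ≤ x.val := by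
    intro S h x hx
    have := Finset.min'_le (S.image ZMod.val) x.val (Finset.mem_image_of_mem _ hx)
    rw [hf]; simpa [h] using this
  have hgmem : ∀ S, S.Nonempty → ∃ x ∈ S, x.val = g S := by
    intro S h
    have := Finset.max'_mem (S.image ZMod.val) (h.image _)
    rw [Finset.mem_image] at this
    obtain ⟨x, hx, hx'⟩ := this
    exact ⟨x, hx, by rw [hg]; simp [h, hx']⟩
  have hgle : ∀ S (h : S.Nonempty), ∀ x ∈ S, x.val ≤ g S := by
    intro S h x hx
    have := Finset.le_max' (S.image ZMod.val) x.val (Finset.mem_image_of_mem _ hx)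
    rw [hg]; simpa [h] using this
  -- bounds on f and g values
  have hflt : ∀ S ∈ supp, 1 ≤ f S ∧ f S < n := by
    intro S hS
    obtain ⟨x, hxS, hxv⟩ := hfmem S (hne S hS)
    constructor
    · rcases Nat.eq_zero_or_pos (f S) with h0 | h1
      · exfalso
        rw [h0] at hxv
        have : x = 0 := by
          rwa [ZMod.val_eq_zero] at hxv
        exact (hsupp' S hS).1 (this ▸ hxS)
      · exact h1
    · rw [← hxv]; exact ZMod.val_lt x
  have hglt : ∀ S ∈ supp, 1 ≤ g S ∧ g S < n := by
    intro S hS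
    obtain ⟨x, hxS, hxv⟩ := hgmem S (hne S hS)
    constructor
    · rcases Nat.eq_zero_or_pos (g S) with h0 | h1
      · exfalso
        rw [h0] at hxv
        have : x = 0 := by rwa [ZMod.val_eq_zero] at hxv
        exact (hsupp' S hS).1 (this ▸ hxS)
      · exact h1
    · rw [← hxv]; exact ZMod.val_lt x
  -- cast of min/max as element
  have hcastmem : ∀ S ∈ supp, ((f S : ZMod n) ∈ S ∧ ((f S : ZMod n) - 1) ∉ S) := by
    intro S hS
    obtain ⟨x, hxS, hxv⟩ := hfmem S (hne S hS)
    have hxeq : (f S : ZMod n) = x := by rw [← hxv, ZMod.natCast_val, ZMod.cast_id]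
    refine ⟨hxeq ▸ hxS, ?_⟩
    intro hmem
    obtain ⟨h1, hlt⟩ := hflt S hS
    have hz : ((f S : ZMod n) - 1) = ((f S - 1 : ℕ) : ZMod n) := by
      push_cast [Nat.cast_sub h1]; ring
    have hval : ((f S : ZMod n) - 1).val = f S - 1 := by
      rw [hz, ZMod.val_cast_of_lt (by omega)]
    have := hfle S (hne S hS) _ hmem
    omega
  have hcastmem' : ∀ S ∈ supp, ((g S : ZMod n) ∈ S ∧ ((g S : ZMod n) + 1) ∉ S) := by
    intro S hS
    obtain ⟨x, hxS, hxv⟩ := hgmem S (hne S hS)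
    have hxeq : (g S : ZMod n) = x := by rw [← hxv, ZMod.natCast_val, ZMod.cast_id]
    refine ⟨hxeq ▸ hxS, ?_⟩
    intro hmem
    obtain ⟨h1, hlt⟩ := hglt S hS
    rcases Nat.lt_or_ge (g S + 1) n with hlt' | hge
    · have hz : ((g S : ZMod n) + 1) = ((g S + 1 : ℕ) : ZMod n) := by push_cast; ring
      have hval : ((g S : ZMod n) + 1).val = g S + 1 := by
        rw [hz, ZMod.val_cast_of_lt hlt']
      have := hgle S (hne S hS) _ hmem
      omega
    · -- g S = n - 1, so (g S : ZMod n) + 1 = 0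
      have hgn : g S + 1 = n := by omega
      have : ((g S : ZMod n) + 1) = (0 : ZMod n) := by
        have : ((g S + 1 : ℕ) : ZMod n) = ((n : ℕ) : ZMod n) := by rw [hgn]
        push_cast at this
        simpa [ZMod.natCast_self] using this
      exact (hsupp' S hS).1 (this ▸ hmem)
  -- the two fiberwise bounds
  have hbound : ∀ (F : Finset (ZMod n) → ℕ)
      (hc : ∀ S ∈ supp, ∃ i j : ZMod n, (j = i + 1 ∨ i = j + 1) ∧ i ∈ S ∧ j ∉ S ∧ i = (F S : ZMod n) ∧
        ∀ T ∈ supp, F T = F S → (i ∈ T ∧ j ∉ T)),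
      ∑ U ∈ supp, y U ≤ ((supp.image F).card : ℝ) := by
    intro F hc
    rw [← Finset.sum_fiberwise_of_maps_to (g := F) (t := supp.image F)
      (fun x hx => Finset.mem_image_of_mem _ hx)]
    calc ∑ v ∈ supp.image F, ∑ U ∈ supp.filter (fun U => F U = v), y U
        ≤ ∑ v ∈ supp.image F, 1 := by
          apply Finset.sum_le_sum
          intro v hv
          rw [Finset.mem_image] at hv
          obtain ⟨S, hS, hFS⟩ := hv
          obtain ⟨i, j, hij, hiS, hjS, hieq, hall⟩ := hc S hS
          calc ∑ U ∈ supp.filter (fun U => F U = v), y U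
              ≤ ∑ U ∈ Finset.univ.filter (fun U : Finset (ZMod n) => i ∈ U ∧ j ∉ U), y U := by
                apply Finset.sum_le_sum_of_subset_of_nonneg
                · intro U hU
                  rw [Finset.mem_filter] at hU ⊢
                  refine ⟨Finset.mem_univ _, ?_⟩
                  exact hall U hU.1 (by rw [hU.2, hFS])
                · intro U _ _; exact hnn U
            _ ≤ 1 := hfeas i j hij
      _ = ((supp.image F).card : ℝ) := by rw [Finset.sum_const, nsmul_eq_mul, mul_one]
  -- apply with min
  have hA : ∑ U ∈ supp, y U ≤ ((supp.image f).card : ℝ) := by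
    apply hbound
    intro S hS
    obtain ⟨hin, hout⟩ := hcastmem S hS
    refine ⟨(f S : ZMod n), (f S : ZMod n) - 1, Or.inr (by ring), hin, hout, rfl, ?_⟩
    intro T hT hFT
    obtain ⟨hin', hout'⟩ := hcastmem T hT
    rw [hFT] at hin' hout'
    exact ⟨hin', hout'⟩
  have hB : ∑ U ∈ supp, y U ≤ ((supp.image g).card : ℝ) := by
    apply hbound
    intro S hS
    obtain ⟨hin, hout⟩ := hcastmem' S hS
    refine ⟨(g S : ZMod n), (g S : ZMod n) + 1, Or.inl rfl, hin, hout, rfl, ?_⟩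
    intro T hT hFT
    obtain ⟨hin', hout'⟩ := hcastmem' T hT
    rw [hFT] at hin' hout'
    exact ⟨hin', hout'⟩
  -- cardinality bounds
  set A := supp.image f with hA'
  set B := supp.image g with hB'
  have hn1 : 1 ≤ n := Nat.one_le_iff_ne_zero.mpr (NeZero.ne n)
  have hmpos : 0 < m := Nat.div_pos hkn (by omega)
  have hnkm : n = k * m := (Nat.mul_div_cancel' hdvd).symm
  have hunion : A ∪ B ⊆ Finset.Ico 1 n := by
    intro v hv
    rw [Finset.mem_union] at hv
    rw [Finset.mem_Ico]
    rcases hv with hv | hv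
    · rw [hA', Finset.mem_image] at hv
      obtain ⟨S, hS, rfl⟩ := hv
      exact hflt S hS
    · rw [hB', Finset.mem_image] at hv
      obtain ⟨S, hS, rfl⟩ := hv
      exact hglt S hS
  have hinter : A ∩ B ⊆ (Finset.range k).image (· * m) := by
    intro v hv
    rw [Finset.mem_inter] at hv
    obtain ⟨hvA, hvB⟩ := hv
    rw [hA', Finset.mem_image] at hvA
    rw [hB', Finset.mem_image] at hvB
    obtain ⟨S, hS, hfS⟩ := hvA
    obtain ⟨T, hT, hgT⟩ := hvB
    have hyS : 0 < y S := lt_of_le_of_ne (hnn S) (Ne.symm (Finset.mem_filter.mp hS).2)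
    have hyT : 0 < y T := lt_of_le_of_ne (hnn T) (Ne.symm (Finset.mem_filter.mp hT).2)
    have hiS : ((v : ZMod n)) ∈ S := hfS ▸ (hcastmem S hS).1
    have hiT : ((v : ZMod n)) ∈ T := hgT ▸ (hcastmem' T hT).1
    have hdvdv : m ∣ v := by
      rcases hlam S T hyS hyT with hsub | hsub | hdis
      · -- S ⊆ T : use terminal of S
        obtain ⟨x, hx⟩ := (hsupp' S hS).2
        rw [Finset.mem_inter, Finset.mem_filter] at hx
        obtain ⟨hxS, _, hxdvd⟩ := hx
        have h1 : v ≤ x.val := hfS ▸ hfle S (hne S hS) x hxS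
        have h2 : x.val ≤ v := hgT ▸ hgle T (hne T hT) x (hsub hxS)
        have : x.val = v := le_antisymm h2 h1
        exact this ▸ hxdvd
      · -- T ⊆ S : use terminal of T
        obtain ⟨x, hx⟩ := (hsupp' T hT).2
        rw [Finset.mem_inter, Finset.mem_filter] at hx
        obtain ⟨hxT, _, hxdvd⟩ := hx
        have h1 : v ≤ x.val := hfS ▸ hfle S (hne S hS) x (hsub hxT)
        have h2 : x.val ≤ v := hgT ▸ hgle T (hne T hT) x hxT
        have : x.val = v := le_antisymm h2 h1
        exact this ▸ hxdvd
      · exfalso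
        have : (v : ZMod n) ∈ S ∩ T := Finset.mem_inter.mpr ⟨hiS, hiT⟩
        rw [hdis] at this
        exact Finset.notMem_empty _ this
    have hvlt : v < n := by
      have := hflt S hS
      omega
    rw [Finset.mem_image]
    refine ⟨v / m, Finset.mem_range.mpr ?_, ?_⟩
    · rw [hnkm] at hvlt
      exact Nat.div_lt_of_lt_mul (by rwa [mul_comm] at hvlt)
    · exact Nat.div_mul_cancel hdvdv
  have hcardU : (A ∪ B).card ≤ n - 1 := by
    calc (A ∪ B).card ≤ (Finset.Ico 1 n).card := Finset.card_le_card hunion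
      _ = n - 1 := Nat.card_Ico 1 n
  have hcardI : (A ∩ B).card ≤ k := by
    calc (A ∩ B).card ≤ ((Finset.range k).image (· * m)).card := Finset.card_le_card hinter
      _ ≤ (Finset.range k).card := Finset.card_image_le
      _ = k := Finset.card_range k
  have hcards : A.card + B.card ≤ (n - 1) + k := by
    have := Finset.card_union_add_card_inter A B
    omega
  rw [hsum]
  have hc1 : (A.card : ℝ) + B.card ≤ (n : ℝ) - 1 + k := by
    have : ((A.card + B.card : ℕ) : ℝ) ≤ (((n - 1) + k : ℕ) : ℝ) := by exact_mod_cast hcards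
    push_cast [Nat.cast_sub hn1] at this
    linarith
  linarith [hA, hB]


private lemma stmt7_isLeast_part (n k : ℕ) [NeZero n] (hk : 2 ≤ k) (hkn : k ≤ n) (hdvd : k ∣ n) :
    IsLeast { m : ℕ | ∃ E : Finset (ZMod n × ZMod n),
        (∀ e ∈ E, e.2 = e.1 + 1) ∧
        (∀ s₁ ∈ Finset.univ.filter (fun i : ZMod n => (n / k) ∣ i.val),
         ∀ s₂ ∈ Finset.univ.filter (fun i : ZMod n => (n / k) ∣ i.val),
          Relation.ReflTransGen (fun a b => (a, b) ∈ E ∨ (b, a) ∈ E) s₁ s₂) ∧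
        m = E.card } (n - n / k) := by
  classical
  set m := n / k with hm
  have hn1 : 1 ≤ n := Nat.one_le_iff_ne_zero.mpr (NeZero.ne n)
  have hmpos : 0 < m := Nat.div_pos hkn (by omega)
  have hnkm : n = k * m := (Nat.mul_div_cancel' hdvd).symm
  constructor
  · -- membership : construct E₀
    set E₀ : Finset (ZMod n × ZMod n) :=
      (Finset.range (n - m)).image (fun i : ℕ => (((i : ℕ) : ZMod n), ((i : ℕ) : ZMod n) + 1))
      with hE₀
    refine ⟨E₀, ?_, ?_, ?_⟩
    · intro e he
      rw [hE₀, Finset.mem_image] at he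
      obtain ⟨i, _, rfl⟩ := he
      rfl
    · -- connectivity
      set r : ZMod n → ZMod n → Prop := fun a b => (a, b) ∈ E₀ ∨ (b, a) ∈ E₀ with hr
      have hrsymm : Symmetric r := by
        intro a b hab
        exact hab.symm
      have hpath : ∀ i : ℕ, i ≤ n - m → Relation.ReflTransGen r 0 (i : ZMod n) := by
        intro i
        induction i with
        | zero =>
          intro _
          simp only [Nat.cast_zero]
          exact Relation.ReflTransGen.refl
        | succ i ih =>
          intro hi
          have h1 : Relation.ReflTransGen r 0 (i : ZMod n) := ih (by omega)
          refine h1.tail ?_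
          have hmem : (((i : ℕ) : ZMod n), ((i : ℕ) : ZMod n) + 1) ∈ E₀ := by
            rw [hE₀]
            exact Finset.mem_image_of_mem _ (Finset.mem_range.mpr (by omega))
          have hcast : (((i + 1 : ℕ)) : ZMod n) = ((i : ℕ) : ZMod n) + 1 := by push_cast; ring
          rw [hcast]
          exact Or.inl hmem
      have hterm : ∀ s : ZMod n, m ∣ s.val → Relation.ReflTransGen r 0 s := by
        intro s hs
        obtain ⟨c, hc⟩ := hs
        have hslt : s.val < n := ZMod.val_lt s
        have hn2 : n = m * k := by rw [hnkm, mul_comm]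
        have hck : c < k := by
          by_contra h
          push_neg at h
          have h1 : m * k ≤ m * c := Nat.mul_le_mul_left m h
          omega
        have hsle : s.val ≤ n - m := by
          have h1 : m * (c + 1) ≤ m * k := Nat.mul_le_mul_left m hck
          rw [Nat.mul_succ] at h1
          omega
        have := hpath s.val hsle
        rwa [ZMod.natCast_val, ZMod.cast_id] at this
      intro s₁ hs₁ s₂ hs₂
      rw [Finset.mem_filter] at hs₁ hs₂
      have h1 := hterm s₁ hs₁.2
      have h2 := hterm s₂ hs₂.2
      exact (haveI : Std.Symm r := ⟨fun a b h => hrsymm h⟩; Std.Symm.symm _ _ h1).trans h2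
    · -- cardinality
      rw [hE₀, Finset.card_image_of_injOn, Finset.card_range]
      intro i hi j hj hij
      rw [Finset.mem_coe, Finset.mem_range] at hi hj
      have h1 : (((i : ℕ)) : ZMod n) = (((j : ℕ)) : ZMod n) := congrArg Prod.fst hij
      have h2 := congrArg ZMod.val h1
      rwa [ZMod.val_cast_of_lt (by omega), ZMod.val_cast_of_lt (by omega)] at h2
  · -- lower bound
    rintro c ⟨E, hE, hconn, rfl⟩
    -- separation lemma
    have sep : ∀ a b : ZMod n, (a, a + 1) ∉ E → (b, b + 1) ∉ E →
        a.val / m < b.val / m → False := by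
      intro a b ha hb hab
      set j := a.val / m with hj
      set l := b.val / m with hl
      have hblt : b.val < n := ZMod.val_lt b
      have halt : a.val < n := ZMod.val_lt a
      have htval : (j + 1) * m ≤ b.val := by
        calc (j + 1) * m ≤ l * m := Nat.mul_le_mul_right m (by omega)
        _ ≤ b.val := by rw [hl]; exact Nat.div_mul_le_self b.val m
      have hta : a.val < (j + 1) * m := by
        have h1 := Nat.div_add_mod a.val m
        have h2 : a.val % m < m := Nat.mod_lt _ hmpos
        calc a.val = m * j + a.val % m := by rw [hj]; omega
        _ < m * j + m := by omega
        _ = (j + 1) * m := by ring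
      set t : ZMod n := (((j + 1) * m : ℕ) : ZMod n) with ht
      have htv : t.val = (j + 1) * m := ZMod.val_cast_of_lt (by omega)
      set Q : ZMod n → Prop := fun v => a.val < v.val ∧ v.val ≤ b.val with hQ
      have hane : ∀ c' : ZMod n, (c', c' + 1) ∈ E → c'.val ≠ a.val ∧ c'.val ≠ b.val := by
        intro c' hc'
        constructor
        · intro h
          have : c' = a := ZMod.val_injective n h
          exact ha (this ▸ hc')
        · intro h
          have : c' = b := ZMod.val_injective n h
          exact hb (this ▸ hc')
      have key : ∀ c' : ZMod n, (c', c' + 1) ∈ E → (Q c' ↔ Q (c' + 1)) := by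
        intro c' hc'
        obtain ⟨hna, hnb⟩ := hane c' hc'
        have hcv : c'.val < n := ZMod.val_lt c'
        have hval : (c' + 1).val = (c'.val + 1) % n := by
          have h1 : c' + 1 = ((c'.val + 1 : ℕ) : ZMod n) := by
            push_cast [ZMod.natCast_val, ZMod.cast_id]
            ring
          rw [h1, ZMod.val_natCast]
        rcases Nat.lt_or_ge (c'.val + 1) n with hlt | hge
        · rw [Nat.mod_eq_of_lt hlt] at hval
          rw [hQ]
          simp only [hval]
          omega
        · have hn : c'.val + 1 = n := by omega
          rw [hn, Nat.mod_self] at hval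
          rw [hQ]
          simp only [hval]
          omega
      have hstep : ∀ x z : ZMod n, ((x, z) ∈ E ∨ (z, x) ∈ E) → (Q x ↔ Q z) := by
        intro x z hxz
        rcases hxz with h | h
        · have h2 := hE _ h
          simp only at h2
          rw [h2] at h ⊢
          exact key x h
        · have h2 := hE _ h
          simp only at h2
          rw [h2] at h ⊢
          exact (key z h).symm
      have hRT : Relation.ReflTransGen (fun a' b' => (a', b') ∈ E ∨ (b', a') ∈ E) t 0 := by
        apply hconn
        · rw [Finset.mem_filter]
          exact ⟨Finset.mem_univ _, by rw [htv]; exact ⟨j + 1, mul_comm _ _⟩⟩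
        · rw [Finset.mem_filter]
          exact ⟨Finset.mem_univ _, by simp⟩
      have hgen : ∀ z : ZMod n,
          Relation.ReflTransGen (fun a' b' => (a', b') ∈ E ∨ (b', a') ∈ E) t z →
          (Q t ↔ Q z) := by
        intro z hz
        induction hz with
        | refl => exact Iff.rfl
        | tail _ hyz ih => exact ih.trans (hstep _ _ hyz)
      have hiff := hgen 0 hRT
      have hQt : Q t := by
        rw [hQ]
        exact ⟨by omega, by omega⟩
      have hQ0 : ¬ Q 0 := by
        rw [hQ]
        simp [ZMod.val_zero]
      exact hQ0 (hiff.mp hQt)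
    -- at most one bad arc
    have key2 : ∃ j₀ : ℕ, ∀ j : ℕ, (∃ i : ZMod n, i.val / m = j ∧ (i, i + 1) ∉ E) → j = j₀ := by
      by_cases hbad : ∃ j : ℕ, ∃ i : ZMod n, i.val / m = j ∧ (i, i + 1) ∉ E
      · obtain ⟨j₀, i₀, hi₀, hni₀⟩ := hbad
        refine ⟨j₀, fun j hj => ?_⟩
        obtain ⟨i, hi, hni⟩ := hj
        by_contra hne
        rcases lt_or_gt_of_ne hne with h | h
        · exact sep i i₀ hni hni₀ (by omega)
        · exact sep i₀ i hni₀ hni (by omega)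
      · push_neg at hbad
        refine ⟨0, fun j hj => ?_⟩
        obtain ⟨i, hi, hni⟩ := hj
        exact (hni (hbad j i hi)).elim
    obtain ⟨j₀, hj₀⟩ := key2
    -- injection from good arcs into E
    have hinj : (((Finset.range k).erase j₀) ×ˢ Finset.range m).card ≤ E.card := by
      apply Finset.card_le_card_of_injOn
        (fun p => (((m * p.1 + p.2 : ℕ) : ZMod n), ((m * p.1 + p.2 : ℕ) : ZMod n) + 1))
      · rintro ⟨j, r⟩ hp
        rw [Finset.mem_coe, Finset.mem_product, Finset.mem_erase, Finset.mem_range] at hp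
        obtain ⟨⟨hjne, hjk⟩, hr⟩ := hp
        rw [Finset.mem_range] at hr
        have hn2 : n = m * k := by rw [hnkm, mul_comm]
        have hlt : m * j + r < n := by
          have h2 : m * (j + 1) ≤ m * k := Nat.mul_le_mul_left m (by omega)
          rw [Nat.mul_succ] at h2
          omega
        have hiv : (((m * j + r : ℕ) : ZMod n)).val = m * j + r := ZMod.val_cast_of_lt hlt
        have hdiv : (((m * j + r : ℕ) : ZMod n)).val / m = j := by
          rw [hiv, Nat.mul_add_div hmpos, Nat.div_eq_of_lt hr]
          omega
        by_contra hnmem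
        exact hjne (hj₀ j ⟨((m * j + r : ℕ) : ZMod n), hdiv, hnmem⟩)
      · rintro ⟨j, r⟩ hp ⟨j', r'⟩ hp' heq
        rw [Finset.mem_coe, Finset.mem_product, Finset.mem_erase, Finset.mem_range] at hp hp'
        obtain ⟨⟨_, hjk⟩, hr⟩ := hp
        obtain ⟨⟨_, hjk'⟩, hr'⟩ := hp'
        rw [Finset.mem_range] at hr hr'
        have hn2 : n = m * k := by rw [hnkm, mul_comm]
        have hlt : m * j + r < n := by
          have h1 : m * (j + 1) ≤ m * k := Nat.mul_le_mul_left m (by omega)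
          rw [Nat.mul_succ] at h1
          omega
        have hlt' : m * j' + r' < n := by
          have h1 : m * (j' + 1) ≤ m * k := Nat.mul_le_mul_left m (by omega)
          rw [Nat.mul_succ] at h1
          omega
        have h1 : (((m * j + r : ℕ) : ZMod n)) = (((m * j' + r' : ℕ) : ZMod n)) :=
          congrArg Prod.fst heq
        have h2 := congrArg ZMod.val h1
        rw [ZMod.val_cast_of_lt hlt, ZMod.val_cast_of_lt hlt'] at h2
        have hjj : j = j' := by
          have e1 : (m * j + r) / m = j := by
            rw [Nat.mul_add_div hmpos, Nat.div_eq_of_lt hr]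
            omega
          have e2 : (m * j' + r') / m = j' := by
            rw [Nat.mul_add_div hmpos, Nat.div_eq_of_lt hr']
            omega
          rw [h2] at e1
          omega
        refine Prod.ext hjj ?_
        simp only
        subst hjj
        omega
    have hcard : (k - 1) * m ≤ (((Finset.range k).erase j₀) ×ˢ Finset.range m).card := by
      rw [Finset.card_product, Finset.card_range]
      have h1 : k - 1 ≤ ((Finset.range k).erase j₀).card := by
        have h2 := Finset.pred_card_le_card_erase (s := Finset.range k) (a := j₀)
        rw [Finset.card_range] at h2
        omega
      exact Nat.mul_le_mul_right m h1
    have hfin : (k - 1) * m = n - m := by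
      obtain ⟨k', rfl⟩ : ∃ k', k = k' + 1 := ⟨k - 1, by omega⟩
      simp only [Nat.add_sub_cancel]
      rw [hnkm, Nat.succ_mul]
      omega
    omega


private lemma stmt7_part4 : (∀ ε > (0 : ℝ), ∃ k₀ N₀ : ℕ, ∀ k' n' : ℕ, k₀ ≤ k' → N₀ ≤ n' / k' → k' ∣ n' →
      2 - ε < (((k' : ℝ) - 1) / k' * n') / ((n' : ℝ) / 2 + k')) := by
  intro ε hε
  set C : ℕ := ⌈6 / ε⌉₊ + 1 with hC
  refine ⟨C, C, fun k' n' hk' hm' hdvd => ?_⟩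
  have hC6 : (6 : ℝ) / ε < C := by
    calc (6:ℝ)/ε ≤ ⌈6/ε⌉₊ := Nat.le_ceil _
    _ < C := by push_cast [hC]; linarith
  set m' : ℕ := n' / k' with hm
  have hn' : n' = k' * m' := (Nat.mul_div_cancel' hdvd).symm
  have hk0 : 0 < k' := lt_of_lt_of_le (Nat.succ_le_of_lt (Nat.pos_of_ne_zero (by positivity))) hk'
  set K : ℝ := (k' : ℝ) with hK
  set M : ℝ := (m' : ℝ) with hM
  have hKpos : (0:ℝ) < K := by rw [hK]; exact_mod_cast hk0
  have hKC : (C : ℝ) ≤ K := by rw [hK]; exact_mod_cast hk'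
  have hMC : (C : ℝ) ≤ M := by rw [hM]; exact_mod_cast hm'
  have hMpos : (0:ℝ) < M := lt_of_lt_of_le (by positivity : (0:ℝ) < (6/ε)) (le_of_lt (hC6.trans_le hMC))
  have h1 : 6 < ε * K := by
    rw [div_lt_iff₀ hε] at hC6
    nlinarith
  have h2 : 6 < ε * M := by
    rw [div_lt_iff₀ hε] at hC6
    nlinarith
  have hNcast : (n' : ℝ) = K * M := by rw [hn']; push_cast; rfl
  rw [hNcast]
  have hden : (0:ℝ) < K * M / 2 + K := by positivity
  rw [lt_div_iff₀ hden]
  have hexp : (K - 1) / K * (K * M) = (K - 1) * M := by field_simp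
  rw [hexp]
  nlinarith [mul_pos hKpos hMpos, mul_lt_mul_of_pos_left h1 hMpos, mul_lt_mul_of_pos_left h2 hKpos]


/-- On the cycle instances (cycle on n vertices, k equally spaced terminals, unit costs),
the minimum cost of a Steiner tree equals n − n/k = ((k−1)/k)·n, the ratio of the optimum
Steiner tree cost to the value of any laminar-support feasible dual solution is at least
(((k−1)/k)·n)/(n/2 + k), and this lower bound tends to 2 as k → ∞ and n/k → ∞. -/
theorem stmt_7 (n k : ℕ) [NeZero n] (hk : 2 ≤ k) (hkn : k ≤ n) (hdvd : k ∣ n)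
    (y : Finset (ZMod n) → ℝ)
    (hnn : ∀ U, 0 ≤ y U)
    (hsupp : ∀ U : Finset (ZMod n),
      ¬((0 : ZMod n) ∉ U ∧
        (U ∩ Finset.univ.filter (fun i : ZMod n => (n / k) ∣ i.val)).Nonempty) →
      y U = 0)
    (hfeas : ∀ i j : ZMod n, (j = i + 1 ∨ i = j + 1) →
      ∑ U ∈ Finset.univ.filter (fun U : Finset (ZMod n) => i ∈ U ∧ j ∉ U), y U ≤ 1)
    (hlam : ∀ A B : Finset (ZMod n), 0 < y A → 0 < y B →
      A ⊆ B ∨ B ⊆ A ∨ A ∩ B = ∅)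
    (hy : 0 < ∑ U : Finset (ZMod n), y U) :
    IsLeast { m : ℕ | ∃ E : Finset (ZMod n × ZMod n),
        (∀ e ∈ E, e.2 = e.1 + 1) ∧
        (∀ s₁ ∈ Finset.univ.filter (fun i : ZMod n => (n / k) ∣ i.val),
         ∀ s₂ ∈ Finset.univ.filter (fun i : ZMod n => (n / k) ∣ i.val),
          Relation.ReflTransGen (fun a b => (a, b) ∈ E ∨ (b, a) ∈ E) s₁ s₂) ∧
        m = E.card } (n - n / k) ∧
    ((n : ℝ) - (n / k : ℕ)) = ((k : ℝ) - 1) / k * n ∧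
    (((k : ℝ) - 1) / k * n) / ((n : ℝ) / 2 + k)
      ≤ ((n : ℝ) - (n / k : ℕ)) / (∑ U : Finset (ZMod n), y U) ∧
    (∀ ε > (0 : ℝ), ∃ k₀ N₀ : ℕ, ∀ k' n' : ℕ, k₀ ≤ k' → N₀ ≤ n' / k' → k' ∣ n' →
      2 - ε < (((k' : ℝ) - 1) / k' * n') / ((n' : ℝ) / 2 + k')) := by
  have hSle := stmt7_dual_bound n k hk hkn hdvd y hnn hsupp hfeas hlam
  have hnkm : n = k * (n / k) := (Nat.mul_div_cancel' hdvd).symm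
  have hkR : (2 : ℝ) ≤ (k : ℝ) := by exact_mod_cast hk
  have hid : ((n : ℝ) - (n / k : ℕ)) = ((k : ℝ) - 1) / k * n := by
    have hcast : (n : ℝ) = (k : ℝ) * ((n / k : ℕ) : ℝ) := by
      rw [hnkm]; push_cast; rw [← hnkm]
    rw [hcast]
    field_simp
  refine ⟨stmt7_isLeast_part n k hk hkn hdvd, hid, ?_, stmt7_part4⟩
  rw [hid]
  have hden : (0 : ℝ) < (n : ℝ) / 2 + k := by
    have hn0 : (0 : ℝ) ≤ (n : ℝ) := Nat.cast_nonneg n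
    linarith
  have hA : (0 : ℝ) ≤ ((k : ℝ) - 1) / k * n := by
    apply mul_nonneg
    · apply div_nonneg <;> linarith
    · exact Nat.cast_nonneg n
  rw [div_le_div_iff₀ hden hy]
  exact mul_le_mul_of_nonneg_left hSle hA
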